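/- Weighted reservoir sampling, single draw: let U_1,…,U_n be independent random variables on a probability space, each uniformly distributed on the interval (0,1), let w_1,…,w_n > 0 with Z = Σ_{i=1}^n w_i, and define the reservoir keys R_i = U_i^{1/w_i}. Then for each index j, the probability that R_j is strictly larger than R_m for every m ≠ j equals w_j / Z. -/

import Mathlib

open MeasureTheory

/-- Weighted reservoir sampling, single draw: if `U₁,…,Uₙ` are i.i.d. uniform on `(0,1)` and
`Rᵢ = Uᵢ^{1/wᵢ}` with `wᵢ > 0`, then the probability that `Rⱼ` strictly exceeds all other
`Rₘ` is `wⱼ / Z`. -/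
theorem reservoir_single_draw {Ω : Type*} [MeasurableSpace Ω] (P : Measure Ω)
    [IsProbabilityMeasure P] {n : ℕ} (U : Fin n → Ω → ℝ) (hmeas : ∀ i, Measurable (U i))
    (hindep : ProbabilityTheory.iIndepFun U P)
    (hunif : ∀ i, P.map (U i) = volume.restrict (Set.Ioo (0 : ℝ) 1))
    (w : Fin n → ℝ) (hw : ∀ i, 0 < w i) (j : Fin n) :
    P {ω | ∀ m, m ≠ j → U m ω ^ (1 / w m) < U j ω ^ (1 / w j)} =
      ENNReal.ofReal (w j / ∑ i, w i) := by
  obtain ⟨n, rfl⟩ : ∃ m, n = m + 1 := ⟨n - 1, by have := j.pos; omega⟩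
  set μ1 : Measure ℝ := volume.restrict (Set.Ioo (0 : ℝ) 1) with hμ1
  -- the joint map
  set F : Ω → (Fin (n + 1) → ℝ) := fun ω i => U i ω with hF
  have hFmeas : Measurable F := measurable_pi_lambda _ fun i => hmeas i
  -- the joint law is the product of uniforms
  have hmap : P.map F = Measure.pi (fun _ : Fin (n + 1) => μ1) := by
    refine (Measure.pi_eq fun s hs => ?_).symm
    rw [Measure.map_apply hFmeas (MeasurableSet.univ_pi hs)]
    have hpre : F ⁻¹' (Set.pi Set.univ s) = ⋂ i ∈ Finset.univ, U i ⁻¹' s i := by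
      ext ω; simp [Set.mem_pi, hF]
    rw [hpre, hindep.measure_inter_preimage_eq_mul Finset.univ (fun i _ => hs i)]
    refine Finset.prod_congr rfl fun i _ => ?_
    rw [← Measure.map_apply (hmeas i) (hs i), hunif i]
  -- rewrite the event as a preimage under F
  set S : Set (Fin (n + 1) → ℝ) :=
    {x | ∀ m, m ≠ j → x m ^ (1 / w m) < x j ^ (1 / w j)} with hS
  have hSmeas : MeasurableSet S := by
    have : S = ⋂ m, {x : Fin (n + 1) → ℝ | m ≠ j → x m ^ (1 / w m) < x j ^ (1 / w j)} := by
      ext x; simp [hS]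
    rw [this]
    refine MeasurableSet.iInter fun m => ?_
    by_cases hm : m = j
    · simp [hm]
    · simp only [hm, ne_eq, not_false_eq_true, forall_true_left]
      exact measurableSet_lt ((measurable_pi_apply m).pow measurable_const)
        ((measurable_pi_apply j).pow measurable_const)
  have hev : {ω | ∀ m, m ≠ j → U m ω ^ (1 / w m) < U j ω ^ (1 / w j)} = F ⁻¹' S := rfl
  rw [hev, ← Measure.map_apply hFmeas hSmeas, hmap]
  -- split off coordinate j
  set e := MeasurableEquiv.piFinSuccAbove (fun _ : Fin (n + 1) => ℝ) j with he
  set T : Set (ℝ × (Fin n → ℝ)) :=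
    {p | ∀ k, p.2 k ^ (1 / w (j.succAbove k)) < p.1 ^ (1 / w j)} with hT
  have hTmeas : MeasurableSet T := by
    have : T = ⋂ k, {p : ℝ × (Fin n → ℝ) |
        p.2 k ^ (1 / w (j.succAbove k)) < p.1 ^ (1 / w j)} := by ext p; simp [hT]
    rw [this]
    exact MeasurableSet.iInter fun k => measurableSet_lt
      (((measurable_pi_apply k).comp measurable_snd).pow measurable_const)
      (measurable_fst.pow measurable_const)
  have hpre : S = e ⁻¹' T := by
    ext x
    simp only [hS, hT, Set.mem_setOf_eq, Set.mem_preimage, he,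
      MeasurableEquiv.piFinSuccAbove]
    constructor
    · intro hx k
      exact hx (j.succAbove k) (j.succAbove_ne k)
    · intro hx m hm
      obtain ⟨k, rfl⟩ := Fin.exists_succAbove_eq hm
      exact hx k
  have hmp := measurePreserving_piFinSuccAbove (fun _ : Fin (n + 1) => μ1) j
  rw [hpre, hmp.measure_preimage hTmeas.nullMeasurableSet]
  -- Fubini
  set π' : Measure (Fin n → ℝ) := Measure.pi fun _ => μ1 with hπ'
  rw [Measure.prod_apply hTmeas]
  set p : ℝ := (∑ k, w (j.succAbove k)) / w j with hp
  have hsumnn : 0 ≤ ∑ k, w (j.succAbove k) :=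
    Finset.sum_nonneg fun k _ => (hw _).le
  have hpnn : 0 ≤ p := div_nonneg hsumnn (hw j).le
  have hslice : ∀ t ∈ Set.Ioo (0 : ℝ) 1,
      π' (Prod.mk t ⁻¹' T) = ENNReal.ofReal (t ^ p) := by
    intro t ht
    set a : ℝ := t ^ (1 / w j) with ha
    have ha0 : 0 < a := Real.rpow_pos_of_pos ht.1 _
    have ha1 : a < 1 := Real.rpow_lt_one ht.1.le ht.2 (one_div_pos.mpr (hw j))
    have hset : Prod.mk t ⁻¹' T =
        Set.pi Set.univ fun k => {x : ℝ | x ^ (1 / w (j.succAbove k)) < a} := by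
      ext y; simp [hT, Set.mem_pi, ha]
    rw [hset, Measure.pi_pi]
    have hfac : ∀ k : Fin n,
        μ1 {x : ℝ | x ^ (1 / w (j.succAbove k)) < a}
          = ENNReal.ofReal (a ^ w (j.succAbove k)) := by
      intro k
      set c : ℝ := w (j.succAbove k) with hc
      have hc0 : 0 < c := hw _
      set b : ℝ := a ^ c with hb
      have hb0 : 0 < b := Real.rpow_pos_of_pos ha0 _
      have hb1 : b < 1 := Real.rpow_lt_one ha0.le ha1 hc0
      have hbc : b ^ (1 / c) = a := by
        rw [hb, one_div, Real.rpow_rpow_inv ha0.le hc0.ne']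
      have hmeasset : MeasurableSet {x : ℝ | x ^ (1 / c) < a} :=
        measurableSet_lt (measurable_id.pow measurable_const) measurable_const
      rw [hμ1, Measure.restrict_apply hmeasset]
      have : {x : ℝ | x ^ (1 / c) < a} ∩ Set.Ioo 0 1 = Set.Ioo 0 b := by
        ext x
        simp only [Set.mem_inter_iff, Set.mem_setOf_eq, Set.mem_Ioo]
        constructor
        · rintro ⟨hxa, hx0, hx1⟩
          refine ⟨hx0, ?_⟩
          rw [← hbc] at hxa
          exact (Real.rpow_lt_rpow_iff hx0.le hb0.le (by positivity)).mp hxa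
        · rintro ⟨hx0, hxb⟩
          refine ⟨?_, hx0, hxb.trans hb1⟩
          rw [← hbc]
          exact Real.rpow_lt_rpow hx0.le hxb (by positivity)
      rw [this, Real.volume_Ioo, sub_zero]
    rw [Finset.prod_congr rfl fun k _ => hfac k,
      ← ENNReal.ofReal_prod_of_nonneg fun k _ => (Real.rpow_pos_of_pos ha0 _).le,
      ← Real.rpow_sum_of_pos ha0, ha, ← Real.rpow_mul ht.1.le, one_div_mul_eq_div, ← hp]
  have hstep : ∫⁻ t, π' (Prod.mk t ⁻¹' T) ∂μ1
      = ∫⁻ t in Set.Ioo (0:ℝ) 1, ENNReal.ofReal (t ^ p) := by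
    rw [hμ1]
    exact setLIntegral_congr_fun measurableSet_Ioo hslice
  rw [hstep]
  have hint : IntegrableOn (fun t : ℝ => t ^ p) (Set.Ioo 0 1) volume :=
    (intervalIntegral.intervalIntegrable_rpow' (a := 0) (b := 1)
      (show (-1:ℝ) < p by linarith)).1.mono_set Set.Ioo_subset_Ioc_self
  have hnn : 0 ≤ᵐ[volume.restrict (Set.Ioo (0:ℝ) 1)] fun t : ℝ => t ^ p := by
    filter_upwards [self_mem_ae_restrict measurableSet_Ioo] with x hx
    exact Real.rpow_nonneg hx.1.le _
  rw [← ofReal_integral_eq_lintegral_ofReal hint hnn]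
  congr 1
  have hZ : ∑ i, w i = w j + ∑ k, w (j.succAbove k) := Fin.sum_univ_succAbove w j
  have hZ0 : (0:ℝ) < ∑ i, w i := by rw [hZ]; have := hw j; linarith
  have hp1 : p + 1 = (∑ i, w i) / w j := by
    rw [hp, hZ]
    have := (hw j).ne'
    field_simp
    ring
  have hp10 : p + 1 ≠ 0 := by positivity
  rw [← integral_Ioc_eq_integral_Ioo, ← intervalIntegral.integral_of_le zero_le_one,
    integral_rpow (Or.inl (by linarith : (-1:ℝ) < p)), Real.one_rpow,
    Real.zero_rpow hp10, sub_zero, hp1, one_div_div]
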